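/- Let X and Y be roughly geodesic Gromov hyperbolic metric spaces, let f : X → Y be an (L,c)-quasi-isometry, and fix a basepoint o ∈ X. Then there exist constants L' > 0 and C' ≥ 0 such that for all x, y ∈ X: (1/L')·(x,y)_o − C' ≤ (f(x),f(y))_{f(o)} ≤ L'·(x,y)_o + C'. -/
import Mathlib

open Set

/-- The Gromov product `(x,y)_o` in a metric space. -/
noncomputable def gromovProd {X : Type*} [MetricSpace X] (o x y : X) : ℝ :=
  (dist o x + dist o y - dist x y) / 2

/-- `X` is `δ`-hyperbolic. -/
def HyperbolicWith (X : Type*) [MetricSpace X] (δ : ℝ) : Prop :=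
  ∀ w x y z : X, min (gromovProd w x y) (gromovProd w y z) - δ ≤ gromovProd w x z

/-- `X` is `C`-roughly geodesic. -/
def RoughlyGeodesicWith (X : Type*) [MetricSpace X] (C : ℝ) : Prop :=
  ∀ x y : X, ∃ a b : ℝ, a ≤ b ∧ ∃ γ : ℝ → X, γ a = x ∧ γ b = y ∧
    ∀ s ∈ Icc a b, ∀ t ∈ Icc a b, abs (dist (γ s) (γ t) - |s - t|) ≤ C

section Basic

variable {X : Type*} [MetricSpace X]

lemma gromovProd_def (o x y : X) :
    gromovProd o x y = (dist o x + dist o y - dist x y) / 2 := rfl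

lemma gromovProd_nonneg (o x y : X) : 0 ≤ gromovProd o x y := by
  have h := dist_triangle x o y
  rw [dist_comm x o] at h
  rw [gromovProd_def]; linarith

lemma gromovProd_symm (o x y : X) : gromovProd o x y = gromovProd o y x := by
  rw [gromovProd_def, gromovProd_def, dist_comm x y]; ring

lemma gromovProd_le_dist_left (o x y : X) : gromovProd o x y ≤ dist o x := by
  have h := dist_triangle o x y
  rw [gromovProd_def]; linarith

lemma gromovProd_le_dist_right (o x y : X) : gromovProd o x y ≤ dist o y := by
  have h := dist_triangle o y x
  rw [dist_comm y x] at h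
  rw [gromovProd_def]; linarith

lemma gromovProd_ge_sub (w x y : X) : dist w x - dist x y ≤ gromovProd w x y := by
  have h := dist_triangle w y x
  rw [dist_comm y x] at h
  rw [gromovProd_def]; linarith

lemma gromovProd_le_dist_add (o z x y : X) :
    gromovProd o x y ≤ dist o z + gromovProd z x y := by
  have h1 := dist_triangle o z x
  have h2 := dist_triangle o z y
  rw [gromovProd_def, gromovProd_def]; linarith

lemma gromovProd_le_of_close (w w' a a' b b' : X) :
    gromovProd w a b ≤ gromovProd w' a' b' + (dist w w' + dist a a' + dist b b') := by
  have h1 := dist_triangle4 w w' a' a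
  have h2 := dist_triangle4 w w' b' b
  have h3 := dist_triangle4 a' a b b'
  rw [dist_comm a' a] at h1
  rw [dist_comm b' b] at h2
  rw [dist_comm a' a] at h3
  rw [gromovProd_def, gromovProd_def]
  linarith

/-- From a rough geodesic, extract a discrete unit-speed chain. -/
lemma exists_chain {C : ℝ} (hC : 0 ≤ C) (h : RoughlyGeodesicWith X C) (p q : X) :
    ∃ N : ℕ, 1 ≤ N ∧ (N : ℝ) ≤ dist p q + (C + 1) ∧ ∃ z : ℕ → X, z 0 = p ∧ z N = q ∧
      ∀ i j : ℕ, i ≤ j → j ≤ N →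
        ((j : ℝ) - (i : ℝ)) - (C + 1) ≤ dist (z i) (z j) ∧
        dist (z i) (z j) ≤ ((j : ℝ) - (i : ℝ)) + (C + 1) := by
  obtain ⟨a, b, hab, γ, hga, hgb, hg⟩ := h p q
  have hba0 : (0:ℝ) ≤ b - a := by linarith
  have hend := hg a ⟨le_rfl, hab⟩ b ⟨hab, le_rfl⟩
  rw [hga, hgb] at hend
  have habs : |a - b| = b - a := by rw [abs_sub_comm, abs_of_nonneg hba0]
  rw [habs, abs_le] at hend
  set N : ℕ := max 1 ⌈b - a⌉₊ with hNdef
  have hN1 : 1 ≤ N := le_max_left _ _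
  have hNub : (N : ℝ) ≤ (b - a) + 1 := by
    rcases Nat.eq_zero_or_pos ⌈b - a⌉₊ with h0 | hpos
    · have : N = 1 := by omega
      rw [this]; push_cast; linarith
    · have : N = ⌈b - a⌉₊ := by omega
      rw [this]
      exact (Nat.ceil_lt_add_one hba0).le
  have hNlb : b - a ≤ (N : ℝ) := by
    have h1 : (⌈b - a⌉₊ : ℝ) ≤ (N : ℝ) := by exact_mod_cast Nat.cast_le.mpr (le_max_right _ _)
    linarith [Nat.le_ceil (b - a)]
  refine ⟨N, hN1, by linarith, fun i => γ (min (a + i) b), ?_, ?_, ?_⟩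
  · simp only [Nat.cast_zero, add_zero, min_eq_left hab, hga]
  · show γ (min (a + (N:ℝ)) b) = q
    rw [min_eq_right (by linarith), hgb]
  · intro i j hij hjN
    have hiR : (i : ℝ) ≤ (j : ℝ) := by exact_mod_cast hij
    have hjR : (j : ℝ) ≤ (N : ℝ) := by exact_mod_cast hjN
    set si := min (a + (i:ℝ)) b with hsi
    set sj := min (a + (j:ℝ)) b with hsj
    have hsimem : si ∈ Icc a b := by
      rw [hsi]
      exact ⟨le_min (by linarith [(Nat.cast_nonneg i : (0:ℝ) ≤ (i:ℝ))]) hab, min_le_right _ _⟩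
    have hsjmem : sj ∈ Icc a b := by
      rw [hsj]
      exact ⟨le_min (by linarith [(Nat.cast_nonneg j : (0:ℝ) ≤ (j:ℝ))]) hab, min_le_right _ _⟩
    have hsij : si ≤ sj := min_le_min (by linarith) le_rfl
    have hjb : (j : ℝ) - 1 ≤ b - a := by linarith
    have hub : sj - si ≤ (j : ℝ) - i := by
      rcases le_total (a + (i:ℝ)) b with h1 | h1
      · have : si = a + i := min_eq_left h1
        rw [this]
        have : sj ≤ a + j := min_le_left _ _
        linarith
      · have h2 : si = b := min_eq_right h1
        have h3 : sj = b := min_eq_right (by linarith)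
        rw [h2, h3]; linarith
    have hlb : (j : ℝ) - i - 1 ≤ sj - si := by
      rcases le_total (a + (j:ℝ)) b with h1 | h1
      · have h2 : sj = a + j := min_eq_left h1
        have h3 : si ≤ a + i := min_le_left _ _
        rw [h2]; linarith
      · have h2 : sj = b := min_eq_right h1
        have h3 : si ≤ a + i := min_le_left _ _
        rw [h2]; linarith
    have hd := hg si hsimem sj hsjmem
    have habs2 : |si - sj| = sj - si := by rw [abs_sub_comm, abs_of_nonneg (by linarith)]
    rw [habs2, abs_le] at hd
    constructor <;> linarith

end Basic

/-- Iterated hyperbolicity along a chain, with a `clog` penalty. -/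
lemma chain_log {Y : Type*} [MetricSpace Y] {δ : ℝ} (hδ : 0 ≤ δ) (hyp : HyperbolicWith Y δ) :
    ∀ n : ℕ, 1 ≤ n → ∀ (u : ℕ → Y) (w : Y), ∃ i : ℕ, i + 1 ≤ n ∧
      gromovProd w (u i) (u (i + 1)) - δ * (Nat.clog 2 n : ℝ) ≤ gromovProd w (u 0) (u n) := by
  intro n
  induction n using Nat.strong_induction_on with
  | _ n IH =>
    intro hn u w
    rcases Nat.lt_or_ge n 2 with hsmall | h2
    · have hn1 : n = 1 := by omega
      subst hn1
      refine ⟨0, le_rfl, ?_⟩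
      simp [Nat.clog_one_right]
    · set m : ℕ := (n + 1) / 2 with hmdef
      have hm1 : 1 ≤ m := by omega
      have hmn : m < n := by omega
      have h1nm : 1 ≤ n - m := by omega
      have hnm : n - m ≤ m := by omega
      have hnmn : n - m < n := by omega
      have hclog : Nat.clog 2 n = Nat.clog 2 m + 1 := by
        have e : (n + 2 - 1) / 2 = m := by omega
        rw [Nat.clog_of_two_le (by norm_num) h2, e]
      have hclogR : (Nat.clog 2 n : ℝ) = (Nat.clog 2 m : ℝ) + 1 := by
        rw [hclog]; push_cast; ring
      have hyp' := hyp w (u 0) (u m) (u n)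
      rcases le_total (gromovProd w (u 0) (u m)) (gromovProd w (u m) (u n)) with hle | hle
      · have hmin := min_eq_left hle
        obtain ⟨i, hi, hbound⟩ := IH m hmn hm1 u w
        refine ⟨i, by omega, ?_⟩
        rw [hclogR]
        linarith [hbound, hyp', hmin]
      · have hmin := min_eq_right hle
        obtain ⟨i, hi, hbound⟩ := IH (n - m) hnmn h1nm (fun k => u (m + k)) w
        have hbound' : gromovProd w (u (m + i)) (u (m + i + 1)) -
            δ * (Nat.clog 2 (n - m) : ℝ) ≤ gromovProd w (u m) (u n) := by
          simpa [show m + (i + 1) = m + i + 1 by omega, show m + (n - m) = n by omega]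
            using hbound
        have hmono : (Nat.clog 2 (n - m) : ℝ) + 1 ≤ (Nat.clog 2 n : ℝ) := by
          have := Nat.clog_mono_right 2 hnm
          rw [hclogR]
          have : (Nat.clog 2 (n - m) : ℝ) ≤ (Nat.clog 2 m : ℝ) := by exact_mod_cast this
          linarith
        have hmul : δ * ((Nat.clog 2 (n - m) : ℝ) + 1) ≤ δ * (Nat.clog 2 n : ℝ) :=
          mul_le_mul_of_nonneg_left hmono hδ
        refine ⟨m + i, by omega, ?_⟩
        have hexp : δ * ((Nat.clog 2 (n - m) : ℝ) + 1) = δ * (Nat.clog 2 (n - m) : ℝ) + δ := by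
          ring
        linarith [hbound', hyp', hmin]
lemma clog_le_log {N : ℕ} (hN : 1 ≤ N) :
    (Nat.clog 2 N : ℝ) ≤ Real.log N / Real.log 2 + 1 := by
  have hlog2 : (0:ℝ) < Real.log 2 := Real.log_pos (by norm_num)
  rcases Nat.lt_or_ge N 2 with h1 | h2
  · have hN1 : N = 1 := by omega
    subst hN1
    simp [Nat.clog_one_right, Real.log_one]
  · have h2' : 1 < N := h2
    have hpow := Nat.pow_pred_clog_lt_self (b := 2) (by norm_num) h2'
    have hpos : 0 < Nat.clog 2 N := Nat.clog_pos (by norm_num) h2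
    have hpow' : 2 ^ (Nat.clog 2 N - 1) ≤ N := by
      simpa [Nat.pred_eq_sub_one] using hpow.le
    have hcast : ((2:ℝ)) ^ (Nat.clog 2 N - 1) ≤ (N:ℝ) := by exact_mod_cast hpow'
    have hlogle : ((Nat.clog 2 N - 1 : ℕ):ℝ) * Real.log 2 ≤ Real.log N := by
      rw [← Real.log_pow]
      exact Real.log_le_log (by positivity) hcast
    have hc1 : ((Nat.clog 2 N - 1 : ℕ):ℝ) = (Nat.clog 2 N : ℝ) - 1 := by
      rw [Nat.cast_sub hpos, Nat.cast_one]
    rw [hc1] at hlogle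
    rw [← sub_le_iff_le_add, le_div_iff₀ hlog2]
    exact hlogle

/-- Absorption of logarithmic error terms into a linear one. -/
lemma absorb_log {δY L Θ Θ₂ : ℝ} (hδY : 0 ≤ δY) (hL0 : 0 < L)
    (hΘ : 50 ≤ Θ) (hΘ₂ : 150 ≤ Θ₂) :
    ∃ B₆ : ℝ, 0 ≤ B₆ ∧ ∀ (t : ℝ) (N : ℕ), 0 ≤ t → 1 ≤ N → (N:ℝ) ≤ Θ * t + Θ₂ →
      δY * (Nat.clog 2 N : ℝ) ≤ t / (4*L) + B₆ := by
  have hlog2 : (0:ℝ) < Real.log 2 := Real.log_pos (by norm_num)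
  have hlog2' : Real.log 2 ≠ 0 := ne_of_gt hlog2
  set M : ℝ := 4*L*δY*Θ/Real.log 2 + Θ₂ + 1 with hMdef
  have h40 : (0:ℝ) ≤ 4*L*δY*Θ :=
    mul_nonneg (mul_nonneg (mul_nonneg (by norm_num : (0:ℝ) ≤ 4) hL0.le) hδY) (by linarith)
  have hquot : (0:ℝ) ≤ 4*L*δY*Θ/Real.log 2 := div_nonneg h40 hlog2.le
  have hM1 : (1:ℝ) ≤ M := by rw [hMdef]; linarith
  have hM0 : (0:ℝ) < M := by linarith
  have hM0' : M ≠ 0 := ne_of_gt hM0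
  refine ⟨δY * Real.log M / Real.log 2 + δY * Θ₂ / (M * Real.log 2) + δY, ?_, ?_⟩
  · have h1 : (0:ℝ) ≤ Real.log M := Real.log_nonneg hM1
    have h2 : (0:ℝ) ≤ δY * Real.log M / Real.log 2 :=
      div_nonneg (mul_nonneg hδY h1) hlog2.le
    have h3 : (0:ℝ) ≤ δY * Θ₂ / (M * Real.log 2) :=
      div_nonneg (mul_nonneg hδY (by linarith)) (mul_pos hM0 hlog2).le
    linarith
  · intro t N ht hN hNle
    have h1 := clog_le_log hN
    have hN1 : (1:ℝ) ≤ (N:ℝ) := by exact_mod_cast hN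
    have hΘt0 : (0:ℝ) ≤ Θ * t := mul_nonneg (by linarith) ht
    have hargpos : (0:ℝ) < Θ * t + Θ₂ := by linarith
    have h2 : Real.log N ≤ Real.log (Θ * t + Θ₂) := Real.log_le_log (by linarith) hNle
    have h3 : Real.log (Θ * t + Θ₂) ≤ Real.log M + (Θ * t + Θ₂)/M := by
      have h4 := Real.log_le_sub_one_of_pos (div_pos hargpos hM0)
      rw [Real.log_div (by linarith) hM0'] at h4
      linarith
    have s2 : (Nat.clog 2 N : ℝ) ≤ (Real.log M + (Θ*t+Θ₂)/M) / Real.log 2 + 1 := by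
      have u1 := (div_le_div_iff_of_pos_right hlog2).mpr h2
      have u2 := (div_le_div_iff_of_pos_right hlog2).mpr h3
      linarith
    have s3 : δY * (Nat.clog 2 N : ℝ) ≤ δY * ((Real.log M + (Θ*t+Θ₂)/M) / Real.log 2 + 1) :=
      mul_le_mul_of_nonneg_left s2 hδY
    have s4 : δY * ((Real.log M + (Θ*t+Θ₂)/M) / Real.log 2 + 1) =
        δY * Real.log M / Real.log 2 + δY * Θ * t/(M * Real.log 2) +
          δY * Θ₂/(M * Real.log 2) + δY := by
      field_simp
      ring
    have hMlog : 4*L*δY*Θ ≤ M * Real.log 2 := by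
      have h5 : 4*L*δY*Θ/Real.log 2 ≤ M := by rw [hMdef]; linarith
      calc 4*L*δY*Θ = (4*L*δY*Θ/Real.log 2) * Real.log 2 := by field_simp
        _ ≤ M * Real.log 2 := mul_le_mul_of_nonneg_right h5 hlog2.le
    have key : δY * Θ * t / (M * Real.log 2) ≤ t / (4*L) := by
      rw [div_le_div_iff₀ (mul_pos hM0 hlog2) (by linarith)]
      nlinarith [mul_le_mul_of_nonneg_left hMlog ht]
    linarith [s3, s4, key]

/-- The basic logarithmic lower bound for Gromov products under a QI embedding. -/
lemma log_lower {X Y : Type*} [MetricSpace X] [MetricSpace Y]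
    {cX δY : ℝ} (hcX : 0 ≤ cX) (hδY : 0 ≤ δY)
    (hXrg : RoughlyGeodesicWith X cX) (hYhyp : HyperbolicWith Y δY)
    (f : X → Y) (L c : ℝ) (hL : 1 ≤ L) (hc : 0 ≤ c)
    (hqie : ∀ x₁ x₂ : X, dist x₁ x₂ / L - c ≤ dist (f x₁) (f x₂) ∧
      dist (f x₁) (f x₂) ≤ L * dist x₁ x₂ + c)
    (o : X) (p q : X) :
    ∃ N : ℕ, 1 ≤ N ∧ (N:ℝ) ≤ dist p q + (cX + 1) ∧
      gromovProd o p q / L - (3*(cX+1)/(2*L) + 2*c + L*(1+(cX+1)))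
        - δY * (Nat.clog 2 N : ℝ) ≤ gromovProd (f o) (f p) (f q) := by
  have hL0 : (0:ℝ) < L := by linarith
  obtain ⟨N, hN1, hNle, z, hz0, hzN, hzb⟩ := exists_chain hcX hXrg p q
  refine ⟨N, hN1, hNle, ?_⟩
  obtain ⟨i, hi, hchain⟩ := chain_log hδY hYhyp N hN1 (fun k => f (z k)) (f o)
  have hchain' : gromovProd (f o) (f (z i)) (f (z (i+1))) - δY * (Nat.clog 2 N : ℝ) ≤
      gromovProd (f o) (f p) (f q) := by simpa [hz0, hzN] using hchain
  have hiN : i ≤ N := by omega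
  have hstep : dist (z i) (z (i+1)) ≤ 1 + (cX+1) := by
    have h := (hzb i (i+1) (by omega) hi).2
    push_cast at h
    linarith
  have hdzp : dist p (z i) ≤ (i:ℝ) + (cX+1) := by
    have h := (hzb 0 i (by omega) hiN).2
    rw [hz0] at h
    push_cast at h
    linarith
  have hdzq : dist (z i) q ≤ ((N:ℝ) - (i:ℝ)) + (cX+1) := by
    have h := (hzb i N hiN le_rfl).2
    rw [hzN] at h
    linarith
  have hdpq : (N:ℝ) - (cX+1) ≤ dist p q := by
    have h := (hzb 0 N (by omega) le_rfl).1
    rw [hz0, hzN] at h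
    push_cast at h
    linarith
  have hprod : gromovProd (z i) p q ≤ 3 * (cX+1) / 2 := by
    rw [gromovProd_def, dist_comm (z i) p]
    linarith
  have hdo : gromovProd o p q - 3*(cX+1)/2 ≤ dist o (z i) := by
    have h := gromovProd_le_dist_add o (z i) p q
    linarith
  have hq1 := (hqie o (z i)).1
  have hq2 := (hqie (z i) (z (i+1))).2
  have hpair := gromovProd_ge_sub (f o) (f (z i)) (f (z (i+1)))
  have hstepf : dist (f (z i)) (f (z (i+1))) ≤ L*(1+(cX+1)) + c := by
    have := mul_le_mul_of_nonneg_left hstep hL0.le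
    linarith
  have hmono : (gromovProd o p q - 3*(cX+1)/2)/L ≤ dist o (z i)/L :=
    (div_le_div_iff_of_pos_right hL0).mpr hdo
  have hexp : (gromovProd o p q - 3*(cX+1)/2)/L = gromovProd o p q / L - 3*(cX+1)/(2*L) := by
    rw [sub_div, div_div]
  linarith [hchain', hpair, hq1, hstepf, hmono, hexp]
set_option maxHeartbeats 1600000 in
/-- Main lower bound: a QI embedding from a roughly geodesic hyperbolic space
into a hyperbolic space roughly preserves Gromov products from below. -/
lemma main_lower {X Y : Type*} [MetricSpace X] [MetricSpace Y]
    {δX cX δY : ℝ} (hδX : 0 ≤ δX) (hcX : 0 ≤ cX) (hδY : 0 ≤ δY)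
    (hXhyp : HyperbolicWith X δX) (hXrg : RoughlyGeodesicWith X cX)
    (hYhyp : HyperbolicWith Y δY)
    (f : X → Y) (L c : ℝ) (hL : 1 ≤ L) (hc : 0 ≤ c)
    (hqie : ∀ x₁ x₂ : X, dist x₁ x₂ / L - c ≤ dist (f x₁) (f x₂) ∧
      dist (f x₁) (f x₂) ≤ L * dist x₁ x₂ + c)
    (o : X) :
    ∃ B : ℝ, 0 ≤ B ∧ ∀ x y : X,
      gromovProd o x y / (2 * L) - B ≤ gromovProd (f o) (f x) (f y) := by
  have hL0 : (0:ℝ) < L := by linarith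
  set CX : ℝ := cX + 1 with hCXdef
  have hCX1 : (1:ℝ) ≤ CX := by rw [hCXdef]; linarith
  set K₂ : ℝ := 3*CX/(2*L) + 2*c + L*(1+CX) with hK₂def
  have hK₂0 : (0:ℝ) ≤ K₂ := by
    have h1 : (0:ℝ) ≤ 3*CX/(2*L) := div_nonneg (by linarith) (by linarith)
    have h2 : (0:ℝ) ≤ L*(1+CX) := mul_nonneg hL0.le (by linarith)
    rw [hK₂def]; linarith
  set K₄ : ℝ := 2*L*δY + 2*δX + 3*CX + 10 with hK₄def
  have hLδY : (0:ℝ) ≤ 2*L*δY := mul_nonneg (by linarith) hδY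
  have hK₄10 : (10:ℝ) ≤ K₄ := by rw [hK₄def]; linarith
  have hK₄CX : 3*CX + 10 ≤ K₄ := by rw [hK₄def]; linarith
  have hK₄δY : 2*L*δY + 3*CX/2 + 5 ≤ K₄ := by rw [hK₄def]; linarith
  have hK₄δX : 2*δX + 3*CX + 10 ≤ K₄ := by rw [hK₄def]; linarith
  set Θ : ℝ := 4*K₄ + 4*CX + 4*δX + 10 with hΘdef
  have hΘ50 : (50:ℝ) ≤ Θ := by rw [hΘdef]; linarith
  have hΘbig : 4*K₄ + 4*CX + 4*δX + 10 ≤ Θ := le_of_eq hΘdef.symm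
  obtain ⟨B₆, hB₆0, ABS⟩ := absorb_log hδY hL0 hΘ50 (show (150:ℝ) ≤ 3*Θ by linarith)
  set B : ℝ := K₂ + B₆ + 3*δX/L + 2*δY with hBdef
  have hδXL : (0:ℝ) ≤ δX/L := div_nonneg hδX hL0.le
  have hB0 : (0:ℝ) ≤ B := by
    have : 3*δX/L = 3*(δX/L) := by ring
    rw [hBdef]; linarith
  have hCXΘ : CX ≤ Θ := by rw [hΘdef]; linarith
  clear_value CX K₂ K₄ Θ B
  have loglem : ∀ u v : X, ∃ N : ℕ, 1 ≤ N ∧ (N:ℝ) ≤ dist u v + CX ∧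
      gromovProd o u v / L - K₂ - δY * (Nat.clog 2 N : ℝ) ≤
        gromovProd (f o) (f u) (f v) := by
    intro u v
    obtain ⟨N, hN1, hNle, hb⟩ := log_lower hcX hδY hXrg hYhyp f L c hL hc hqie o u v
    rw [← hCXdef] at hNle hb
    rw [← hK₂def] at hb
    exact ⟨N, hN1, hNle, hb⟩
  -- the "small distance" case
  have case1 : ∀ x y : X, dist x y ≤ Θ * gromovProd o x y + Θ →
      gromovProd o x y / (2*L) - B ≤ gromovProd (f o) (f x) (f y) := by
    intro x y hxy
    obtain ⟨N, hN1, hNle, hlog⟩ := loglem x y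
    have ht : 0 ≤ gromovProd o x y := gromovProd_nonneg o x y
    have hNle2 : (N:ℝ) ≤ Θ * gromovProd o x y + 3*Θ := by
      linarith only [hNle, hxy, hCXΘ, hΘ50]
    have habs := ABS (gromovProd o x y) N ht hN1 hNle2
    have e1 : gromovProd o x y / L - gromovProd o x y/(4*L) - gromovProd o x y/(2*L)
        = gromovProd o x y/(4*L) := by field_simp; ring
    have e2 : 0 ≤ gromovProd o x y/(4*L) := div_nonneg ht (by linarith)
    have e3 : 3*δX/L = 3*(δX/L) := by ring
    rw [hBdef]
    linarith only [hlog, habs, e1, e2, e3, hδXL, hδY]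
  -- main induction on the (integer ceiling of the) distance
  have main : ∀ n : ℕ, ∀ x y : X, dist x y ≤ (n:ℝ) →
      gromovProd o x y / (2*L) - B ≤ gromovProd (f o) (f x) (f y) := by
    intro n
    induction n with
    | zero =>
      intro x y h
      apply case1 x y
      have ht : 0 ≤ gromovProd o x y := gromovProd_nonneg o x y
      have h1 : (0:ℝ) ≤ Θ * gromovProd o x y := mul_nonneg (by linarith) ht
      simp only [Nat.cast_zero] at h
      linarith only [h, h1, hΘ50]
    | succ n IH =>
      intro x y hd
      push_cast at hd
      by_cases hsmall : dist x y ≤ Θ * gromovProd o x y + Θ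
      · exact case1 x y hsmall
      have hbig : Θ * gromovProd o x y + Θ < dist x y := not_le.mp hsmall
      set t := gromovProd o x y with htdef
      have ht : 0 ≤ t := gromovProd_nonneg o x y
      have htle_x : t ≤ dist o x := gromovProd_le_dist_left o x y
      have htle_y : t ≤ dist o y := gromovProd_le_dist_right o x y
      have hsum : dist o x + dist o y = dist x y + 2*t := by
        rw [htdef, gromovProd_def]; ring
      have hox : dist o x ≤ dist x y + t := by linarith only [hsum, htle_y]
      have hoy : dist o y ≤ dist x y + t := by linarith only [hsum, htle_x]
      obtain ⟨N₁, hN₁1, hN₁le, z₁, hz₁0, hz₁N, hz₁b⟩ := exists_chain hcX hXrg o x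
      obtain ⟨N₂, hN₂1, hN₂le, z₂, hz₂0, hz₂N, hz₂b⟩ := exists_chain hcX hXrg o y
      rw [← hCXdef] at hN₁le hN₂le
      set T : ℕ := ⌈2*t + 2*K₄⌉₊ with hTdef
      have hT1 : 2*t + 2*K₄ ≤ (T:ℝ) := Nat.le_ceil _
      have hT2 : (T:ℝ) ≤ 2*t + 2*K₄ + 1 := by
        have := Nat.ceil_lt_add_one (show (0:ℝ) ≤ 2*t + 2*K₄ by linarith only [ht, hK₄10])
        rw [← hTdef] at this
        linarith only [this]
      clear_value t T
      have hdox_ub : dist o x ≤ (N₁:ℝ) + CX := by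
        have h := (hz₁b 0 N₁ (Nat.zero_le _) le_rfl).2
        rw [hz₁0, hz₁N, ← hCXdef] at h
        push_cast at h
        linarith only [h]
      have hdox_lb : (N₁:ℝ) - CX ≤ dist o x := by
        have h := (hz₁b 0 N₁ (Nat.zero_le _) le_rfl).1
        rw [hz₁0, hz₁N, ← hCXdef] at h
        push_cast at h
        linarith only [h]
      have hdoy_ub : dist o y ≤ (N₂:ℝ) + CX := by
        have h := (hz₂b 0 N₂ (Nat.zero_le _) le_rfl).2
        rw [hz₂0, hz₂N, ← hCXdef] at h
        push_cast at h
        linarith only [h]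
      have hdoy_lb : (N₂:ℝ) - CX ≤ dist o y := by
        have h := (hz₂b 0 N₂ (Nat.zero_le _) le_rfl).1
        rw [hz₂0, hz₂N, ← hCXdef] at h
        push_cast at h
        linarith only [h]
      by_cases hA1 : T ≤ N₁
      · have hop_ub : dist o (z₁ T) ≤ (T:ℝ) + CX := by
          have h := (hz₁b 0 T (Nat.zero_le _) hA1).2
          rw [hz₁0, ← hCXdef] at h
          push_cast at h
          linarith only [h]
        have hop_lb : (T:ℝ) - CX ≤ dist o (z₁ T) := by
          have h := (hz₁b 0 T (Nat.zero_le _) hA1).1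
          rw [hz₁0, ← hCXdef] at h
          push_cast at h
          linarith only [h]
        have hpx_ub : dist (z₁ T) x ≤ ((N₁:ℝ) - (T:ℝ)) + CX := by
          have h := (hz₁b T N₁ hA1 le_rfl).2
          rw [hz₁N, ← hCXdef] at h
          linarith only [h]
        have hgxp : (T:ℝ) - 3*CX/2 ≤ gromovProd o x (z₁ T) := by
          rw [gromovProd_def, dist_comm x (z₁ T)]
          linarith only [hdox_lb, hop_lb, hpx_ub, hN₁le, hdox_ub]
        have hdxp : dist x (z₁ T) ≤ (n:ℝ) := by
          rw [dist_comm x (z₁ T)]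
          linarith only [hpx_ub, hN₁le, hox, hT1, hK₄CX, ht, hd, hCX1]
        have term_a : t/(2*L) - B + 2*δY ≤ gromovProd (f o) (f x) (f (z₁ T)) := by
          have hIH := IH x (z₁ T) hdxp
          have hstep : t + 4*L*δY ≤ gromovProd o x (z₁ T) := by
            linarith only [hgxp, hT1, ht, hK₄δY, hCX1]
          have hdd : 2*δY ≤ (gromovProd o x (z₁ T) - t)/(2*L) := by
            rw [le_div_iff₀ (show (0:ℝ) < 2*L by linarith only [hL0])]
            have e : 2*δY*(2*L) = 4*L*δY := by ring
            linarith only [hstep, e]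
          have e5 : (gromovProd o x (z₁ T) - t)/(2*L) = gromovProd o x (z₁ T)/(2*L) - t/(2*L) := by
            ring
          linarith only [hIH, hdd, e5]
        by_cases hA2 : T ≤ N₂
        · have hoq_ub : dist o (z₂ T) ≤ (T:ℝ) + CX := by
            have h := (hz₂b 0 T (Nat.zero_le _) hA2).2
            rw [hz₂0, ← hCXdef] at h
            push_cast at h
            linarith only [h]
          have hoq_lb : (T:ℝ) - CX ≤ dist o (z₂ T) := by
            have h := (hz₂b 0 T (Nat.zero_le _) hA2).1
            rw [hz₂0, ← hCXdef] at h
            push_cast at h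
            linarith only [h]
          have hqy_ub : dist (z₂ T) y ≤ ((N₂:ℝ) - (T:ℝ)) + CX := by
            have h := (hz₂b T N₂ hA2 le_rfl).2
            rw [hz₂N, ← hCXdef] at h
            linarith only [h]
          have hgyq : (T:ℝ) - 3*CX/2 ≤ gromovProd o y (z₂ T) := by
            rw [gromovProd_def, dist_comm y (z₂ T)]
            linarith only [hdoy_lb, hoq_lb, hqy_ub, hN₂le, hdoy_ub]
          have hgxq : t - δX ≤ gromovProd o x (z₂ T) := by
            have h := hXhyp o x y (z₂ T)
            have hmin : t ≤ min (gromovProd o x y) (gromovProd o y (z₂ T)) :=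
              le_min (le_of_eq htdef) (by linarith only [hgyq, hT1, ht, hK₄CX, hCX1])
            linarith only [h, hmin]
          have hgpq : t - 2*δX ≤ gromovProd o (z₁ T) (z₂ T) := by
            have h := hXhyp o (z₁ T) x (z₂ T)
            have hsymm : gromovProd o (z₁ T) x = gromovProd o x (z₁ T) := gromovProd_symm o (z₁ T) x
            have hmin : t - δX ≤ min (gromovProd o (z₁ T) x) (gromovProd o x (z₂ T)) :=
              le_min (by linarith only [hsymm, hgxp, hT1, ht, hK₄CX, hCX1, hδX]) (by linarith only [hgxq])
            linarith only [h, hmin]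
          have hdpq : dist (z₁ T) (z₂ T) ≤ 2*t + (4*K₄ + 2 + 2*CX + 4*δX) := by
            have e : gromovProd o (z₁ T) (z₂ T) = (dist o (z₁ T) + dist o (z₂ T) - dist (z₁ T) (z₂ T))/2 :=
              gromovProd_def o (z₁ T) (z₂ T)
            linarith only [e, hgpq, hop_ub, hoq_ub, hT2]
          obtain ⟨N₃, hN₃1, hN₃le, hlog3⟩ := loglem (z₁ T) (z₂ T)
          have hN₃le2 : (N₃:ℝ) ≤ Θ*t + 3*Θ := by
            have h2t : 2*t ≤ Θ*t :=
              mul_le_mul_of_nonneg_right (show (2:ℝ) ≤ Θ by linarith only [hΘ50]) ht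
            linarith only [hN₃le, hdpq, h2t, hΘbig, hCX1, hK₄10, hδX, hΘ50]
          have habs3 := ABS t N₃ ht hN₃1 hN₃le2
          have term_b : t/(2*L) - B + 2*δY ≤ gromovProd (f o) (f (z₁ T)) (f (z₂ T)) := by
            have hmono2 : (t - 2*δX)/L ≤ gromovProd o (z₁ T) (z₂ T) / L :=
              (div_le_div_iff_of_pos_right hL0).mpr (by linarith only [hgpq])
            have e1 : (t - 2*δX)/L = t/L - 2*(δX/L) := by ring
            have e2 : t/L - t/(4*L) - t/(2*L) = t/(4*L) := by field_simp; ring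
            have e3 : 0 ≤ t/(4*L) := div_nonneg ht (by linarith only [hL0])
            have e6 : 3*δX/L = 3*(δX/L) := by ring
            rw [hBdef]
            linarith only [hlog3, habs3, hmono2, e1, e2, e3, e6, hδXL]
          have hdqy : dist (z₂ T) y ≤ (n:ℝ) := by
            linarith only [hqy_ub, hN₂le, hoy, hT1, hK₄CX, ht, hd, hCX1]
          have term_c : t/(2*L) - B + 2*δY ≤ gromovProd (f o) (f (z₂ T)) (f y) := by
            have hIH := IH (z₂ T) y hdqy
            have hsymm : gromovProd o (z₂ T) y = gromovProd o y (z₂ T) := gromovProd_symm o (z₂ T) y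
            have hstep : t + 4*L*δY ≤ gromovProd o (z₂ T) y := by
              linarith only [hsymm, hgyq, hT1, ht, hK₄δY, hCX1]
            have hdd : 2*δY ≤ (gromovProd o (z₂ T) y - t)/(2*L) := by
              rw [le_div_iff₀ (show (0:ℝ) < 2*L by linarith only [hL0])]
              have e : 2*δY*(2*L) = 4*L*δY := by ring
              linarith only [hstep, e]
            have e5 : (gromovProd o (z₂ T) y - t)/(2*L) = gromovProd o (z₂ T) y/(2*L) - t/(2*L) := by
              ring
            linarith only [hIH, hdd, e5]
          have hy1 := hYhyp (f o) (f (z₁ T)) (f (z₂ T)) (f y)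
          have hy2 := hYhyp (f o) (f x) (f (z₁ T)) (f y)
          have hmin1 : t/(2*L) - B + 2*δY ≤
              min (gromovProd (f o) (f (z₁ T)) (f (z₂ T))) (gromovProd (f o) (f (z₂ T)) (f y)) :=
            le_min term_b term_c
          have h5 : t/(2*L) - B + δY ≤ gromovProd (f o) (f (z₁ T)) (f y) := by
            linarith only [hy1, hmin1]
          have hmin2 : t/(2*L) - B + δY ≤
              min (gromovProd (f o) (f x) (f (z₁ T))) (gromovProd (f o) (f (z₁ T)) (f y)) :=
            le_min (by linarith only [term_a, hδY]) h5
          linarith only [hy2, hmin2]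
        · -- N₂ < T
          have hA2R : (N₂:ℝ) < (T:ℝ) := by exact_mod_cast not_le.mp hA2
          have hgyp : t - δX ≤ gromovProd o y (z₁ T) := by
            have h := hXhyp o y x (z₁ T)
            have hsymm : gromovProd o y x = gromovProd o x y := gromovProd_symm o y x
            have hsymm2 : gromovProd o x (z₁ T) = gromovProd o x (z₁ T) := rfl
            have hmin : t ≤ min (gromovProd o y x) (gromovProd o x (z₁ T)) :=
              le_min (by linarith only [hsymm, htdef])
                (by linarith only [hgxp, hT1, ht, hK₄CX, hCX1])
            linarith only [h, hmin]
          have hdpy : dist (z₁ T) y ≤ 2*t + (4*K₄ + 2 + 2*CX + 2*δX) := by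
            have e : gromovProd o (z₁ T) y = (dist o (z₁ T) + dist o y - dist (z₁ T) y)/2 :=
              gromovProd_def o (z₁ T) y
            have hsymm : gromovProd o (z₁ T) y = gromovProd o y (z₁ T) := gromovProd_symm o (z₁ T) y
            linarith only [e, hsymm, hgyp, hop_ub, hdoy_ub, hA2R, hN₂le, hT2, hoy, ht]
          obtain ⟨N₃, hN₃1, hN₃le, hlog3⟩ := loglem (z₁ T) y
          have hN₃le2 : (N₃:ℝ) ≤ Θ*t + 3*Θ := by
            have h2t : 2*t ≤ Θ*t :=
              mul_le_mul_of_nonneg_right (show (2:ℝ) ≤ Θ by linarith only [hΘ50]) ht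
            linarith only [hN₃le, hdpy, h2t, hΘbig, hCX1, hK₄10, hδX, hΘ50]
          have habs3 := ABS t N₃ ht hN₃1 hN₃le2
          have term2 : t/(2*L) - B + δY ≤ gromovProd (f o) (f (z₁ T)) (f y) := by
            have hsymm : gromovProd o (z₁ T) y = gromovProd o y (z₁ T) := gromovProd_symm o (z₁ T) y
            have hmono2 : (t - δX)/L ≤ gromovProd o (z₁ T) y / L :=
              (div_le_div_iff_of_pos_right hL0).mpr (by linarith only [hsymm, hgyp])
            have e1 : (t - δX)/L = t/L - (δX/L) := by ring
            have e2 : t/L - t/(4*L) - t/(2*L) = t/(4*L) := by field_simp; ring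
            have e3 : 0 ≤ t/(4*L) := div_nonneg ht (by linarith only [hL0])
            have e6 : 3*δX/L = 3*(δX/L) := by ring
            rw [hBdef]
            linarith only [hlog3, habs3, hmono2, e1, e2, e3, e6, hδXL, hδY]
          have hy2 := hYhyp (f o) (f x) (f (z₁ T)) (f y)
          have hmin2 : t/(2*L) - B + δY ≤
              min (gromovProd (f o) (f x) (f (z₁ T))) (gromovProd (f o) (f (z₁ T)) (f y)) :=
            le_min (by linarith only [term_a, hδY]) term2
          linarith only [hy2, hmin2]
      · -- N₁ < T
        have hA1R : (N₁:ℝ) < (T:ℝ) := by exact_mod_cast not_le.mp hA1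
        by_cases hA2 : T ≤ N₂
        · have hoq_ub : dist o (z₂ T) ≤ (T:ℝ) + CX := by
            have h := (hz₂b 0 T (Nat.zero_le _) hA2).2
            rw [hz₂0, ← hCXdef] at h
            push_cast at h
            linarith only [h]
          have hoq_lb : (T:ℝ) - CX ≤ dist o (z₂ T) := by
            have h := (hz₂b 0 T (Nat.zero_le _) hA2).1
            rw [hz₂0, ← hCXdef] at h
            push_cast at h
            linarith only [h]
          have hqy_ub : dist (z₂ T) y ≤ ((N₂:ℝ) - (T:ℝ)) + CX := by
            have h := (hz₂b T N₂ hA2 le_rfl).2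
            rw [hz₂N, ← hCXdef] at h
            linarith only [h]
          have hgyq : (T:ℝ) - 3*CX/2 ≤ gromovProd o y (z₂ T) := by
            rw [gromovProd_def, dist_comm y (z₂ T)]
            linarith only [hdoy_lb, hoq_lb, hqy_ub, hN₂le, hdoy_ub]
          have hgxq : t - δX ≤ gromovProd o x (z₂ T) := by
            have h := hXhyp o x y (z₂ T)
            have hmin : t ≤ min (gromovProd o x y) (gromovProd o y (z₂ T)) :=
              le_min (le_of_eq htdef) (by linarith only [hgyq, hT1, ht, hK₄CX, hCX1])
            linarith only [h, hmin]
          have hdxq : dist x (z₂ T) ≤ 2*t + (4*K₄ + 2 + 2*CX + 2*δX) := by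
            have e : gromovProd o x (z₂ T) = (dist o x + dist o (z₂ T) - dist x (z₂ T))/2 :=
              gromovProd_def o x (z₂ T)
            linarith only [e, hgxq, hdox_ub, hoq_ub, hA1R, hN₁le, hT2, hox, ht]
          obtain ⟨N₃, hN₃1, hN₃le, hlog3⟩ := loglem x (z₂ T)
          have hN₃le2 : (N₃:ℝ) ≤ Θ*t + 3*Θ := by
            have h2t : 2*t ≤ Θ*t :=
              mul_le_mul_of_nonneg_right (show (2:ℝ) ≤ Θ by linarith only [hΘ50]) ht
            linarith only [hN₃le, hdxq, h2t, hΘbig, hCX1, hK₄10, hδX, hΘ50]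
          have habs3 := ABS t N₃ ht hN₃1 hN₃le2
          have term1 : t/(2*L) - B + δY ≤ gromovProd (f o) (f x) (f (z₂ T)) := by
            have hmono2 : (t - δX)/L ≤ gromovProd o x (z₂ T) / L :=
              (div_le_div_iff_of_pos_right hL0).mpr (by linarith only [hgxq])
            have e1 : (t - δX)/L = t/L - (δX/L) := by ring
            have e2 : t/L - t/(4*L) - t/(2*L) = t/(4*L) := by field_simp; ring
            have e3 : 0 ≤ t/(4*L) := div_nonneg ht (by linarith only [hL0])
            have e6 : 3*δX/L = 3*(δX/L) := by ring
            rw [hBdef]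
            linarith only [hlog3, habs3, hmono2, e1, e2, e3, e6, hδXL, hδY]
          have hdqy : dist (z₂ T) y ≤ (n:ℝ) := by
            linarith only [hqy_ub, hN₂le, hoy, hT1, hK₄CX, ht, hd, hCX1]
          have term2 : t/(2*L) - B + δY ≤ gromovProd (f o) (f (z₂ T)) (f y) := by
            have hIH := IH (z₂ T) y hdqy
            have hsymm : gromovProd o (z₂ T) y = gromovProd o y (z₂ T) := gromovProd_symm o (z₂ T) y
            have hstep : t + 4*L*δY ≤ gromovProd o (z₂ T) y := by
              linarith only [hsymm, hgyq, hT1, ht, hK₄δY, hCX1]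
            have hdd : 2*δY ≤ (gromovProd o (z₂ T) y - t)/(2*L) := by
              rw [le_div_iff₀ (show (0:ℝ) < 2*L by linarith only [hL0])]
              have e : 2*δY*(2*L) = 4*L*δY := by ring
              linarith only [hstep, e]
            have e5 : (gromovProd o (z₂ T) y - t)/(2*L) = gromovProd o (z₂ T) y/(2*L) - t/(2*L) := by
              ring
            linarith only [hIH, hdd, e5, hδY]
          have hy2 := hYhyp (f o) (f x) (f (z₂ T)) (f y)
          have hmin2 : t/(2*L) - B + δY ≤
              min (gromovProd (f o) (f x) (f (z₂ T))) (gromovProd (f o) (f (z₂ T)) (f y)) :=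
            le_min term1 term2
          linarith only [hy2, hmin2]
        · exfalso
          have hA2R : (N₂:ℝ) < (T:ℝ) := by exact_mod_cast not_le.mp hA2
          have h4t : 4*t ≤ Θ*t :=
            mul_le_mul_of_nonneg_right (show (4:ℝ) ≤ Θ by linarith only [hΘ50]) ht
          have hxy_ub : dist x y ≤ dist o x + dist o y := by
            have h := dist_triangle x o y
            rw [dist_comm x o] at h
            linarith only [h]
          linarith only [hbig, hxy_ub, hdox_ub, hdoy_ub, hA1R, hA2R, hN₁le, hN₂le,
            hT2, h4t, hΘbig, hCX1, hδX, ht, hK₄10]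
  exact ⟨B, hB0, fun x y => main ⌈dist x y⌉₊ x y (Nat.le_ceil _)⟩
/-- A quasi-isometry between roughly geodesic hyperbolic spaces distorts Gromov
products at most by a multiplicative and additive constant. -/
theorem gromovProd_comparable_of_quasiIsometry
    {X Y : Type*} [MetricSpace X] [MetricSpace Y]
    (δX : ℝ) (hδX : 0 ≤ δX) (hXhyp : HyperbolicWith X δX)
    (cX : ℝ) (hcX : 0 ≤ cX) (hXrg : RoughlyGeodesicWith X cX)
    (δY : ℝ) (hδY : 0 ≤ δY) (hYhyp : HyperbolicWith Y δY)
    (cY : ℝ) (hcY : 0 ≤ cY) (hYrg : RoughlyGeodesicWith Y cY)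
    (f : X → Y) (L c D : ℝ) (hL : 0 < L) (hc : 0 ≤ c) (hD : 0 ≤ D)
    (hqie : ∀ x₁ x₂ : X, dist x₁ x₂ / L - c ≤ dist (f x₁) (f x₂) ∧
      dist (f x₁) (f x₂) ≤ L * dist x₁ x₂ + c)
    (hqi_onto : ∀ y : Y, ∃ x : X, dist (f x) y ≤ D)
    (o : X) :
    ∃ L' > (0:ℝ), ∃ C' ≥ (0:ℝ), ∀ x y : X,
      gromovProd o x y / L' - C' ≤ gromovProd (f o) (f x) (f y) ∧
      gromovProd (f o) (f x) (f y) ≤ L' * gromovProd o x y + C' := by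
  set L₀ : ℝ := max L 1 with hL₀def
  have hL₀1 : (1:ℝ) ≤ L₀ := le_max_right _ _
  have hL₀0 : (0:ℝ) < L₀ := by linarith
  have hLle : L ≤ L₀ := le_max_left _ _
  clear_value L₀
  have hqie₀ : ∀ x₁ x₂ : X, dist x₁ x₂ / L₀ - c ≤ dist (f x₁) (f x₂) ∧
      dist (f x₁) (f x₂) ≤ L₀ * dist x₁ x₂ + c := by
    intro x₁ x₂
    obtain ⟨h1, h2⟩ := hqie x₁ x₂
    constructor
    · have h3 : dist x₁ x₂ / L₀ ≤ dist x₁ x₂ / L :=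
        div_le_div_of_nonneg_left dist_nonneg hL hLle
      linarith
    · have h3 : L * dist x₁ x₂ ≤ L₀ * dist x₁ x₂ :=
        mul_le_mul_of_nonneg_right hLle dist_nonneg
      linarith
  choose g hg using hqi_onto
  -- `g` is an (L₀, c₂)-quasi-isometric embedding
  set c₂ : ℝ := L₀ * (2*D + c) + 2*D + c with hc₂def
  have hc₂0 : (0:ℝ) ≤ c₂ := by
    have : (0:ℝ) ≤ L₀ * (2*D + c) := mul_nonneg hL₀0.le (by linarith)
    rw [hc₂def]; linarith
  have hgqie : ∀ y₁ y₂ : Y, dist y₁ y₂ / L₀ - c₂ ≤ dist (g y₁) (g y₂) ∧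
      dist (g y₁) (g y₂) ≤ L₀ * dist y₁ y₂ + c₂ := by
    intro y₁ y₂
    have h1 := (hqie₀ (g y₁) (g y₂)).1
    have h2 := (hqie₀ (g y₁) (g y₂)).2
    have h3 : dist (f (g y₁)) (f (g y₂)) ≤ dist y₁ y₂ + 2*D := by
      have h4 := dist_triangle4 (f (g y₁)) y₁ y₂ (f (g y₂))
      have h5 := hg y₁
      have h6 := hg y₂
      rw [dist_comm y₂ (f (g y₂))] at h4
      linarith
    have h7 : dist y₁ y₂ - 2*D ≤ dist (f (g y₁)) (f (g y₂)) := by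
      have h4 := dist_triangle4 y₁ (f (g y₁)) (f (g y₂)) y₂
      have h5 := hg y₁
      have h6 := hg y₂
      rw [dist_comm y₁ (f (g y₁))] at h4
      linarith
    constructor
    · -- lower bound
      have h8 : dist y₁ y₂ - 2*D - c ≤ L₀ * dist (g y₁) (g y₂) := by linarith
      have h9 : (dist y₁ y₂ - 2*D - c)/L₀ ≤ dist (g y₁) (g y₂) := by
        rw [div_le_iff₀ hL₀0]
        calc dist y₁ y₂ - 2*D - c ≤ L₀ * dist (g y₁) (g y₂) := h8
          _ = dist (g y₁) (g y₂) * L₀ := by ring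
      have h10 : dist y₁ y₂/L₀ - (2*D + c)/L₀ ≤ dist (g y₁) (g y₂) := by
        have e : (dist y₁ y₂ - 2*D - c)/L₀ = dist y₁ y₂/L₀ - (2*D + c)/L₀ := by ring
        linarith
      have h11 : (2*D + c)/L₀ ≤ 2*D + c := div_le_self (by linarith) hL₀1
      rw [hc₂def]
      have h12 : (0:ℝ) ≤ L₀ * (2*D + c) := mul_nonneg hL₀0.le (by linarith)
      linarith
    · -- upper bound
      have h8 : dist (g y₁) (g y₂) / L₀ ≤ dist y₁ y₂ + 2*D + c := by linarith
      have h9 : dist (g y₁) (g y₂) ≤ L₀ * (dist y₁ y₂ + 2*D + c) := by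
        rw [div_le_iff₀ hL₀0] at h8
        calc dist (g y₁) (g y₂) = dist (g y₁) (g y₂) := rfl
          _ ≤ (dist y₁ y₂ + 2*D + c) * L₀ := h8
          _ = L₀ * (dist y₁ y₂ + 2*D + c) := by ring
      have e : L₀ * (dist y₁ y₂ + 2*D + c) = L₀ * dist y₁ y₂ + L₀ * (2*D + c) := by ring
      rw [hc₂def]
      linarith
  obtain ⟨B₁, hB₁0, hlow⟩ :=
    main_lower hδX hcX hδY hXhyp hXrg hYhyp f L₀ c hL₀1 hc hqie₀ o
  obtain ⟨B₂, hB₂0, hlow₂⟩ :=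
    main_lower hδY hcY hδX hYhyp hYrg hXhyp g L₀ c₂ hL₀1 hc₂0 hgqie (f o)
  -- points are moved a bounded distance by g ∘ f
  have hclose : ∀ x' : X, dist (g (f x')) x' ≤ L₀ * (D + c) := by
    intro x'
    have h2 := (hqie₀ (g (f x')) x').1
    have h3 : dist (f (g (f x'))) (f x') ≤ D := hg (f x')
    have h4 : dist (g (f x')) x' / L₀ ≤ D + c := by linarith
    rw [div_le_iff₀ hL₀0] at h4
    calc dist (g (f x')) x' ≤ (D + c) * L₀ := h4
      _ = L₀ * (D + c) := by ring
  have hD₂0 : (0:ℝ) ≤ L₀ * (D + c) := mul_nonneg hL₀0.le (by linarith)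
  refine ⟨2*L₀, by linarith, 2*L₀*(3*(L₀*(D+c)) + B₂) + B₁, ?_, fun x y => ⟨?_, ?_⟩⟩
  · have : (0:ℝ) ≤ 2*L₀*(3*(L₀*(D+c)) + B₂) :=
      mul_nonneg (by linarith) (by linarith)
    linarith
  · -- lower bound
    have h1 := hlow x y
    have : (0:ℝ) ≤ 2*L₀*(3*(L₀*(D+c)) + B₂) :=
      mul_nonneg (by linarith) (by linarith)
    linarith
  · -- upper bound via the quasi-inverse
    have h1 := hlow₂ (f x) (f y)
    have h2 : gromovProd (g (f o)) (g (f x)) (g (f y)) ≤ gromovProd o x y +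
        (dist (g (f o)) o + dist (g (f x)) x + dist (g (f y)) y) :=
      gromovProd_le_of_close (g (f o)) o (g (f x)) x (g (f y)) y
    have h3 := hclose o
    have h4 := hclose x
    have h5 := hclose y
    have h6 : gromovProd (f o) (f x) (f y) / (2*L₀) ≤
        gromovProd o x y + 3*(L₀*(D+c)) + B₂ := by linarith
    rw [div_le_iff₀ (by linarith : (0:ℝ) < 2*L₀)] at h6
    have h7 : (gromovProd o x y + 3*(L₀*(D+c)) + B₂) * (2*L₀) =
        2*L₀ * gromovProd o x y + 2*L₀*(3*(L₀*(D+c)) + B₂) := by ring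
    linarith
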